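/- arXiv:1706.02793 — 2 statements merged into one kernel-verified Lean document; each statement's English description precedes it below -/
import Mathlib

section
/- Let α, β, γ ∈ ℝ³ with α₁ ≥ α₂ ≥ α₃, β₁ ≥ β₂ ≥ β₃, γ₁ ≥ γ₂ ≥ γ₃, ∑γ_i = ∑α_i + ∑β_i, and suppose γ lies in the Horn polytope H̃_{αβ}. Then 𝒥₃(α,β;γ) ≥ 0. -/
open scoped Real

/-- The piecewise-linear function `ψ_{αβ}(γ)` of the paper, with
`x₁ = γ₁−α₁−β₂`, `x₂ = γ₂−α₃−β₁`, `x₃ = γ₃−α₂−β₃`. -/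
noncomputable def psi3 (a b g : Fin 3 → ℝ) : ℝ :=
  if 0 ≤ g 1 - a 2 - b 0 ∧ g 0 - a 0 - b 1 < 0 then
    (g 1 - a 2 - b 0) - (g 0 - a 0 - b 1)
  else if 0 ≤ g 2 - a 1 - b 2 ∧ g 1 - a 2 - b 0 < 0 then
    (g 2 - a 1 - b 2) - (g 1 - a 2 - b 0)
  else if 0 ≤ g 0 - a 0 - b 1 ∧ g 2 - a 1 - b 2 < 0 then
    (g 0 - a 0 - b 1) - (g 2 - a 1 - b 2)
  else 0

/-- The kernel function `𝒥₃(α,β;γ)`. -/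
noncomputable def J3 (a b g : Fin 3 → ℝ) : ℝ :=
  (1 / 6) * (a 0 - a 2 + (b 0 - b 2) + (g 0 - g 2))
    - (1 / 2) * |a 1 + b 1 - g 1|
    - (1 / 3) * psi3 a b g - (1 / 3) * psi3 b a g

/-- `a` is the weakly decreasing sequence of eigenvalues of the Hermitian matrix `A`. -/
def IsEigSeq {k : ℕ} (A : Matrix (Fin k) (Fin k) ℂ) (a : Fin k → ℝ) : Prop :=
  Antitone a ∧ ∃ (hA : A.IsHermitian) (σ : Equiv.Perm (Fin k)), hA.eigenvalues ∘ σ = a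

/-- `γ` lies in the Horn polytope `H̃_{αβ}`. -/
def HornMem {k : ℕ} (a b g : Fin k → ℝ) : Prop :=
  ∃ A B : Matrix (Fin k) (Fin k) ℂ, IsEigSeq A a ∧ IsEigSeq B b ∧ IsEigSeq (A + B) g


open scoped InnerProductSpace ComplexOrder

noncomputable section

abbrev E3 := EuclideanSpace ℂ (Fin 3)

lemma rayleigh_eq (T : E3 →ₗ[ℂ] E3) (hT : T.IsSymmetric) (u : OrthonormalBasis (Fin 3) ℂ E3)
    (d : Fin 3 → ℝ) (hu : ∀ i, T (u i) = (d i : ℂ) • u i) (x : E3) :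
    RCLike.re (⟪x, T x⟫_ℂ) = ∑ i, d i * ‖⟪u i, x⟫_ℂ‖ ^ 2 := by
  have key : ⟪x, T x⟫_ℂ = ∑ i, ((d i * ‖⟪u i, x⟫_ℂ‖ ^ 2 : ℝ) : ℂ) := by
    rw [← u.sum_inner_mul_inner x (T x)]
    refine Finset.sum_congr rfl fun i _ => ?_
    have h1 : ⟪u i, T x⟫_ℂ = (d i : ℂ) * ⟪u i, x⟫_ℂ := by
      rw [← hT (u i) x, hu i, inner_smul_left, Complex.conj_ofReal]
    have h2 : ⟪x, u i⟫_ℂ = (starRingEnd ℂ) ⟪u i, x⟫_ℂ := (inner_conj_symm x (u i)).symm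
    rw [h1, h2]
    rw [show (starRingEnd ℂ) ⟪u i, x⟫_ℂ * ((d i : ℂ) * ⟪u i, x⟫_ℂ)
        = (d i : ℂ) * (⟪u i, x⟫_ℂ * (starRingEnd ℂ) ⟪u i, x⟫_ℂ) by ring]
    rw [Complex.mul_conj, Complex.normSq_eq_norm_sq]
    push_cast
    ring
  rw [key, ← Complex.ofReal_sum]
  simp only [RCLike.re_to_complex, Complex.ofReal_re]

lemma norm_sq_eq_sum (u : OrthonormalBasis (Fin 3) ℂ E3) (x : E3) :
    ‖x‖ ^ 2 = ∑ i, ‖⟪u i, x⟫_ℂ‖ ^ 2 := by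
  have := rayleigh_eq (LinearMap.id) (fun a b => rfl) u (fun _ => 1)
    (fun i => by simp) x
  simpa [← inner_self_eq_norm_sq (𝕜 := ℂ) x] using this

lemma master (T S : E3 →ₗ[ℂ] E3) (hT : T.IsSymmetric) (hS : S.IsSymmetric)
    (u v w : OrthonormalBasis (Fin 3) ℂ E3) (a b g : Fin 3 → ℝ)
    (hu : ∀ i, T (u i) = (a i : ℂ) • u i) (hv : ∀ i, S (v i) = (b i : ℂ) • v i)
    (hw : ∀ i, T (w i) + S (w i) = (g i : ℂ) • w i)
    (P Q R : Finset (Fin 3)) (ca cb cg : ℝ)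
    (hPa : ∀ i, i ∉ P → a i ≤ ca) (hQb : ∀ i, i ∉ Q → b i ≤ cb)
    (hRg : ∀ i, i ∉ R → cg ≤ g i)
    (hcard : P.card + Q.card + R.card ≤ 2) :
    cg ≤ ca + cb := by
  classical
  set SP := (Submodule.span ℂ (↑(P.image u) : Set E3))ᗮ with hSPdef
  set SQ := (Submodule.span ℂ (↑(Q.image v) : Set E3))ᗮ with hSQdef
  set SR := (Submodule.span ℂ (↑(R.image w) : Set E3))ᗮ with hSRdef
  have hdim : ∀ (s : Finset E3), 3 - s.card ≤
      Module.finrank ℂ ((Submodule.span ℂ (↑s : Set E3))ᗮ) := by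
    intro s
    have h1 : Module.finrank ℂ (Submodule.span ℂ (↑s : Set E3)) ≤ s.card :=
      finrank_span_finset_le_card s
    have h2 := Submodule.finrank_add_finrank_orthogonal
      (K := Submodule.span ℂ (↑s : Set E3))
    have h3 : Module.finrank ℂ E3 = 3 := by simp
    omega
  have hP3 : 3 - P.card ≤ Module.finrank ℂ SP := by
    have h := hdim (P.image u)
    rw [← hSPdef] at h
    have := Finset.card_image_le (s := P) (f := u)
    omega
  have hQ3 : 3 - Q.card ≤ Module.finrank ℂ SQ := by
    have h := hdim (Q.image v)
    rw [← hSQdef] at h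
    have := Finset.card_image_le (s := Q) (f := v)
    omega
  have hR3 : 3 - R.card ≤ Module.finrank ℂ SR := by
    have h := hdim (R.image w)
    rw [← hSRdef] at h
    have := Finset.card_image_le (s := R) (f := w)
    omega
  -- intersection is nontrivial
  have hinf1 : Module.finrank ℂ SP + Module.finrank ℂ SQ
      ≤ 3 + Module.finrank ℂ (SP ⊓ SQ : Submodule ℂ E3) := by
    have := Submodule.finrank_sup_add_finrank_inf_eq SP SQ
    have h4 : Module.finrank ℂ (SP ⊔ SQ : Submodule ℂ E3) ≤ 3 := by
      have := Submodule.finrank_le (SP ⊔ SQ)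
      simpa using this
    omega
  have hinf2 : Module.finrank ℂ (SP ⊓ SQ : Submodule ℂ E3) + Module.finrank ℂ SR
      ≤ 3 + Module.finrank ℂ (SP ⊓ SQ ⊓ SR : Submodule ℂ E3) := by
    have := Submodule.finrank_sup_add_finrank_inf_eq (SP ⊓ SQ) SR
    have h4 : Module.finrank ℂ ((SP ⊓ SQ) ⊔ SR : Submodule ℂ E3) ≤ 3 := by
      have := Submodule.finrank_le ((SP ⊓ SQ) ⊔ SR)
      simpa using this
    omega
  have hpos : 0 < Module.finrank ℂ (SP ⊓ SQ ⊓ SR : Submodule ℂ E3) := by omega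
  have hne : (SP ⊓ SQ ⊓ SR : Submodule ℂ E3) ≠ ⊥ := by
    intro h
    rw [h] at hpos
    simp at hpos
  obtain ⟨x, hx, hx0⟩ := Submodule.exists_mem_ne_zero_of_ne_bot hne
  obtain ⟨⟨hxP, hxQ⟩, hxR⟩ := hx
  have horth : ∀ (s : Finset (Fin 3)) (b : OrthonormalBasis (Fin 3) ℂ E3) (y : E3),
      y ∈ (Submodule.span ℂ (↑(s.image b) : Set E3))ᗮ → ∀ i ∈ s, ⟪b i, y⟫_ℂ = 0 := by
    intro s bb y hy i hi
    exact hy (bb i) (Submodule.subset_span (by simp; exact ⟨i, hi, rfl⟩))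
  have hxPo := horth P u x hxP
  have hxQo := horth Q v x hxQ
  have hxRo := horth R w x hxR
  have hnx : (0:ℝ) < ‖x‖ ^ 2 := by
    have : (0:ℝ) < ‖x‖ := norm_pos_iff.mpr hx0
    positivity
  -- Rayleigh bounds
  have hTx : RCLike.re (⟪x, T x⟫_ℂ) ≤ ca * ‖x‖ ^ 2 := by
    rw [rayleigh_eq T hT u a hu x, norm_sq_eq_sum u x, Finset.mul_sum]
    refine Finset.sum_le_sum fun i _ => ?_
    by_cases hi : i ∈ P
    · simp [hxPo i hi]
    · have := hPa i hi
      nlinarith [sq_nonneg ‖⟪u i, x⟫_ℂ‖]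
  have hSx : RCLike.re (⟪x, S x⟫_ℂ) ≤ cb * ‖x‖ ^ 2 := by
    rw [rayleigh_eq S hS v b hv x, norm_sq_eq_sum v x, Finset.mul_sum]
    refine Finset.sum_le_sum fun i _ => ?_
    by_cases hi : i ∈ Q
    · simp [hxQo i hi]
    · have := hQb i hi
      nlinarith [sq_nonneg ‖⟪v i, x⟫_ℂ‖]
  have hCx : cg * ‖x‖ ^ 2 ≤ RCLike.re (⟪x, T x + S x⟫_ℂ) := by
    have hTS : (T + S).IsSymmetric := hT.add hS
    have := rayleigh_eq (T + S) hTS w g (fun i => by simpa using hw i) x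
    rw [show T x + S x = (T + S) x from rfl, this, norm_sq_eq_sum w x, Finset.mul_sum]
    refine Finset.sum_le_sum fun i _ => ?_
    by_cases hi : i ∈ R
    · simp [hxRo i hi]
    · have := hRg i hi
      nlinarith [sq_nonneg ‖⟪w i, x⟫_ℂ‖]
  have hsplit : RCLike.re (⟪x, T x + S x⟫_ℂ)
      = RCLike.re (⟪x, T x⟫_ℂ) + RCLike.re (⟪x, S x⟫_ℂ) := by
    rw [inner_add_right, map_add]
  nlinarith [hCx, hTx, hSx, hsplit]

end

lemma eigen_basis_data (A : Matrix (Fin 3) (Fin 3) ℂ) (a : Fin 3 → ℝ) (h : IsEigSeq A a) :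
    ∃ u : OrthonormalBasis (Fin 3) ℂ E3,
      ∀ j, Matrix.toEuclideanLin A (u j) = ((a j : ℝ) : ℂ) • u j := by
  obtain ⟨-, hA, σ, hσ⟩ := h
  refine ⟨hA.eigenvectorBasis.reindex σ.symm, fun j => ?_⟩
  have hj : (hA.eigenvectorBasis.reindex σ.symm) j = hA.eigenvectorBasis (σ j) := by
    rw [OrthonormalBasis.reindex_apply, Equiv.symm_symm]
  rw [hj]
  have h1 := hA.mulVec_eigenvectorBasis (σ j)
  have ha : a j = hA.eigenvalues (σ j) := by rw [← hσ]; rfl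
  ext i
  have h2 := congr_fun h1 i
  simp only [Pi.smul_apply] at h2
  rw [Matrix.toEuclideanLin_apply]
  simp only [PiLp.toLp_apply]
  rw [h2, ha]
  simp [PiLp.smul_apply, Complex.real_smul]

lemma weyl_upper (A B : Matrix (Fin 3) (Fin 3) ℂ) (a b g : Fin 3 → ℝ)
    (hA : IsEigSeq A a) (hB : IsEigSeq B b) (hC : IsEigSeq (A + B) g)
    (P Q R : Finset (Fin 3)) (ca cb cg : ℝ)
    (hPa : ∀ i, i ∉ P → a i ≤ ca) (hQb : ∀ i, i ∉ Q → b i ≤ cb)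
    (hRg : ∀ i, i ∉ R → cg ≤ g i)
    (hcard : P.card + Q.card + R.card ≤ 2) : cg ≤ ca + cb := by
  obtain ⟨u, hu⟩ := eigen_basis_data A a hA
  obtain ⟨v, hv⟩ := eigen_basis_data B b hB
  obtain ⟨w, hw⟩ := eigen_basis_data (A + B) g hC
  have hTsym : (Matrix.toEuclideanLin A).IsSymmetric :=
    Matrix.isHermitian_iff_isSymmetric.1 hA.2.choose
  have hSsym : (Matrix.toEuclideanLin B).IsSymmetric :=
    Matrix.isHermitian_iff_isSymmetric.1 hB.2.choose
  refine master _ _ hTsym hSsym u v w a b g hu hv (fun i => ?_) P Q R ca cb cg hPa hQb hRg hcard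
  have := hw i
  rwa [map_add, LinearMap.add_apply] at this

lemma weyl_lower (A B : Matrix (Fin 3) (Fin 3) ℂ) (a b g : Fin 3 → ℝ)
    (hA : IsEigSeq A a) (hB : IsEigSeq B b) (hC : IsEigSeq (A + B) g)
    (P Q R : Finset (Fin 3)) (ca cb cg : ℝ)
    (hPa : ∀ i, i ∉ P → ca ≤ a i) (hQb : ∀ i, i ∉ Q → cb ≤ b i)
    (hRg : ∀ i, i ∉ R → g i ≤ cg)
    (hcard : P.card + Q.card + R.card ≤ 2) : ca + cb ≤ cg := by
  obtain ⟨u, hu⟩ := eigen_basis_data A a hA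
  obtain ⟨v, hv⟩ := eigen_basis_data B b hB
  obtain ⟨w, hw⟩ := eigen_basis_data (A + B) g hC
  have hTsym : (Matrix.toEuclideanLin A).IsSymmetric :=
    Matrix.isHermitian_iff_isSymmetric.1 hA.2.choose
  have hSsym : (Matrix.toEuclideanLin B).IsSymmetric :=
    Matrix.isHermitian_iff_isSymmetric.1 hB.2.choose
  have hTn : (-(Matrix.toEuclideanLin A)).IsSymmetric := fun x y => by
    simp only [LinearMap.neg_apply, inner_neg_left, inner_neg_right, hTsym x y]
  have hSn : (-(Matrix.toEuclideanLin B)).IsSymmetric := fun x y => by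
    simp only [LinearMap.neg_apply, inner_neg_left, inner_neg_right, hSsym x y]
  have key := master (-(Matrix.toEuclideanLin A)) (-(Matrix.toEuclideanLin B)) hTn hSn
    u v w (-a) (-b) (-g)
    (fun i => by simp only [LinearMap.neg_apply, hu i, Pi.neg_apply]; push_cast; module)
    (fun i => by simp only [LinearMap.neg_apply, hv i, Pi.neg_apply]; push_cast; module)
    (fun i => by
      have := hw i
      rw [map_add, LinearMap.add_apply] at this
      simp only [LinearMap.neg_apply, Pi.neg_apply]
      rw [show -(Matrix.toEuclideanLin A) (w i) + -(Matrix.toEuclideanLin B) (w i)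
          = -((Matrix.toEuclideanLin A) (w i) + (Matrix.toEuclideanLin B) (w i)) by module, this]
      push_cast; module)
    P Q R (-ca) (-cb) (-cg)
    (fun i hi => by simpa using neg_le_neg (hPa i hi))
    (fun i hi => by simpa using neg_le_neg (hQb i hi))
    (fun i hi => by simpa using neg_le_neg (hRg i hi))
    hcard
  linarith

lemma psiSpec (a b g : Fin 3 → ℝ)
    (h : (g 0 - a 0 - b 1) + (g 1 - a 2 - b 0) + (g 2 - a 1 - b 2) = 0) :
    (psi3 a b g = (g 1 - a 2 - b 0) - (g 0 - a 0 - b 1) ∧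
      0 ≤ g 1 - a 2 - b 0 ∧ g 0 - a 0 - b 1 < 0) ∨
    (psi3 a b g = (g 2 - a 1 - b 2) - (g 1 - a 2 - b 0) ∧
      0 ≤ g 2 - a 1 - b 2 ∧ g 1 - a 2 - b 0 < 0) ∨
    (psi3 a b g = (g 0 - a 0 - b 1) - (g 2 - a 1 - b 2) ∧
      0 ≤ g 0 - a 0 - b 1 ∧ g 2 - a 1 - b 2 < 0) ∨
    (psi3 a b g = 0 ∧ g 0 - a 0 - b 1 = 0 ∧ g 1 - a 2 - b 0 = 0 ∧ g 2 - a 1 - b 2 = 0) := by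
  unfold psi3
  split_ifs with h1 h2 h3
  · exact Or.inl ⟨rfl, h1⟩
  · exact Or.inr (Or.inl ⟨rfl, h2⟩)
  · exact Or.inr (Or.inr (Or.inl ⟨rfl, h3⟩))
  · refine Or.inr (Or.inr (Or.inr ⟨rfl, ?_⟩))
    push_neg at h1 h2 h3
    rcases le_or_gt 0 (g 0 - a 0 - b 1) with c1 | c1
    · have t3 := h3 c1
      have t2 := h2 t3
      exact ⟨by linarith, by linarith, by linarith⟩
    · have t2 : g 1 - a 2 - b 0 < 0 := by
        by_contra hh; push_neg at hh; linarith [h1 hh]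
      have t3 : g 2 - a 1 - b 2 < 0 := by
        by_contra hh; push_neg at hh; linarith [h2 hh]
      exfalso; linarith

theorem arith (a b g : Fin 3 → ℝ)
    (ha1 : a 1 ≤ a 0) (ha2 : a 2 ≤ a 1) (hb1 : b 1 ≤ b 0) (hb2 : b 2 ≤ b 1)
    (hg1 : g 1 ≤ g 0) (hg2 : g 2 ≤ g 1)
    (htr : g 0 + g 1 + g 2 = a 0 + a 1 + a 2 + (b 0 + b 1 + b 2))
    (u00 : g 0 ≤ a 0 + b 0)
    (u01 : g 1 ≤ a 0 + b 1) (u10 : g 1 ≤ a 1 + b 0)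
    (u02 : g 2 ≤ a 0 + b 2) (u11 : g 2 ≤ a 1 + b 1) (u20 : g 2 ≤ a 2 + b 0)
    (l22 : a 2 + b 2 ≤ g 2)
    (l12 : a 1 + b 2 ≤ g 1) (l21 : a 2 + b 1 ≤ g 1)
    (l02 : a 0 + b 2 ≤ g 0) (l11 : a 1 + b 1 ≤ g 0) (l20 : a 2 + b 0 ≤ g 0) :
    0 ≤ J3 a b g := by
  unfold J3
  rcases psiSpec a b g (by linarith) with ⟨e1, s1⟩ | ⟨e1, s1⟩ | ⟨e1, s1⟩ | ⟨e1, s1⟩ <;>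
  rcases psiSpec b a g (by linarith) with ⟨e2, s2⟩ | ⟨e2, s2⟩ | ⟨e2, s2⟩ | ⟨e2, s2⟩ <;>
  rw [e1, e2] <;>
  rcases abs_cases (a 1 + b 1 - g 1) with ⟨he, hs⟩ | ⟨he, hs⟩ <;> rw [he] <;>
  obtain ⟨s1a, s1b⟩ := s1 <;> obtain ⟨s2a, s2b⟩ := s2 <;> linarith [s1b, s2b]

theorem stmt5 (a b g : Fin 3 → ℝ)
    (ha : a 1 ≤ a 0 ∧ a 2 ≤ a 1) (hb : b 1 ≤ b 0 ∧ b 2 ≤ b 1) (hg : g 1 ≤ g 0 ∧ g 2 ≤ g 1)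
    (htr : g 0 + g 1 + g 2 = a 0 + a 1 + a 2 + (b 0 + b 1 + b 2))
    (hH : HornMem a b g) :
    0 ≤ J3 a b g := by
  obtain ⟨ha1, ha2⟩ := ha
  obtain ⟨hb1, hb2⟩ := hb
  obtain ⟨hg1, hg2⟩ := hg
  obtain ⟨A, B, hEA, hEB, hEC⟩ := hH
  have u00 : g 0 ≤ a 0 + b 0 :=
    weyl_upper A B a b g hEA hEB hEC ∅ ∅ {1, 2} (a 0) (b 0) (g 0)
      (fun i hi => by fin_cases i <;> simp_all <;> linarith)
      (fun i hi => by fin_cases i <;> simp_all <;> linarith)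
      (fun i hi => by fin_cases i <;> simp_all <;> linarith) (by decide)
  have u01 : g 1 ≤ a 0 + b 1 :=
    weyl_upper A B a b g hEA hEB hEC ∅ {0} {2} (a 0) (b 1) (g 1)
      (fun i hi => by fin_cases i <;> simp_all <;> linarith)
      (fun i hi => by fin_cases i <;> simp_all <;> linarith)
      (fun i hi => by fin_cases i <;> simp_all <;> linarith) (by decide)
  have u10 : g 1 ≤ a 1 + b 0 :=
    weyl_upper A B a b g hEA hEB hEC {0} ∅ {2} (a 1) (b 0) (g 1)
      (fun i hi => by fin_cases i <;> simp_all <;> linarith)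
      (fun i hi => by fin_cases i <;> simp_all <;> linarith)
      (fun i hi => by fin_cases i <;> simp_all <;> linarith) (by decide)
  have u02 : g 2 ≤ a 0 + b 2 :=
    weyl_upper A B a b g hEA hEB hEC ∅ {0, 1} ∅ (a 0) (b 2) (g 2)
      (fun i hi => by fin_cases i <;> simp_all <;> linarith)
      (fun i hi => by fin_cases i <;> simp_all <;> linarith)
      (fun i hi => by fin_cases i <;> simp_all <;> linarith) (by decide)
  have u11 : g 2 ≤ a 1 + b 1 :=
    weyl_upper A B a b g hEA hEB hEC {0} {0} ∅ (a 1) (b 1) (g 2)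
      (fun i hi => by fin_cases i <;> simp_all <;> linarith)
      (fun i hi => by fin_cases i <;> simp_all <;> linarith)
      (fun i hi => by fin_cases i <;> simp_all <;> linarith) (by decide)
  have u20 : g 2 ≤ a 2 + b 0 :=
    weyl_upper A B a b g hEA hEB hEC {0, 1} ∅ ∅ (a 2) (b 0) (g 2)
      (fun i hi => by fin_cases i <;> simp_all <;> linarith)
      (fun i hi => by fin_cases i <;> simp_all <;> linarith)
      (fun i hi => by fin_cases i <;> simp_all <;> linarith) (by decide)
  have l22 : a 2 + b 2 ≤ g 2 :=
    weyl_lower A B a b g hEA hEB hEC ∅ ∅ {0, 1} (a 2) (b 2) (g 2)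
      (fun i hi => by fin_cases i <;> simp_all <;> linarith)
      (fun i hi => by fin_cases i <;> simp_all <;> linarith)
      (fun i hi => by fin_cases i <;> simp_all <;> linarith) (by decide)
  have l12 : a 1 + b 2 ≤ g 1 :=
    weyl_lower A B a b g hEA hEB hEC {2} ∅ {0} (a 1) (b 2) (g 1)
      (fun i hi => by fin_cases i <;> simp_all <;> linarith)
      (fun i hi => by fin_cases i <;> simp_all <;> linarith)
      (fun i hi => by fin_cases i <;> simp_all <;> linarith) (by decide)
  have l21 : a 2 + b 1 ≤ g 1 :=
    weyl_lower A B a b g hEA hEB hEC ∅ {2} {0} (a 2) (b 1) (g 1)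
      (fun i hi => by fin_cases i <;> simp_all <;> linarith)
      (fun i hi => by fin_cases i <;> simp_all <;> linarith)
      (fun i hi => by fin_cases i <;> simp_all <;> linarith) (by decide)
  have l02 : a 0 + b 2 ≤ g 0 :=
    weyl_lower A B a b g hEA hEB hEC {1, 2} ∅ ∅ (a 0) (b 2) (g 0)
      (fun i hi => by fin_cases i <;> simp_all <;> linarith)
      (fun i hi => by fin_cases i <;> simp_all <;> linarith)
      (fun i hi => by fin_cases i <;> simp_all <;> linarith) (by decide)
  have l11 : a 1 + b 1 ≤ g 0 :=
    weyl_lower A B a b g hEA hEB hEC {2} {2} ∅ (a 1) (b 1) (g 0)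
      (fun i hi => by fin_cases i <;> simp_all <;> linarith)
      (fun i hi => by fin_cases i <;> simp_all <;> linarith)
      (fun i hi => by fin_cases i <;> simp_all <;> linarith) (by decide)
  have l20 : a 2 + b 0 ≤ g 0 :=
    weyl_lower A B a b g hEA hEB hEC ∅ {1, 2} ∅ (a 2) (b 0) (g 0)
      (fun i hi => by fin_cases i <;> simp_all <;> linarith)
      (fun i hi => by fin_cases i <;> simp_all <;> linarith)
      (fun i hi => by fin_cases i <;> simp_all <;> linarith) (by decide)
  exact arith a b g ha1 ha2 hb1 hb2 hg1 hg2 htr u00 u01 u10 u02 u11 u20 l22 l12 l21 l02 l11 l20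
end

section
/- Let α, β, γ ∈ ℤ³ with α₁ ≥ α₂ ≥ α₃, β₁ ≥ β₂ ≥ β₃, γ₁ ≥ γ₂ ≥ γ₃, ∑γ_i = ∑α_i + ∑β_i, and suppose γ lies in the Horn polytope H̃_{αβ}. Then 𝒥₃(α,β;γ) is a nonnegative integer. -/
open scoped Real

namespace HornAux

open Matrix Module Submodule

variable {n : ℕ}

/-- The (real part of the) quadratic form of a matrix. -/
noncomputable def qf (A : Matrix (Fin n) (Fin n) ℂ) (x : EuclideanSpace ℂ (Fin n)) : ℝ :=
  RCLike.re (inner (𝕜 := ℂ) x (Matrix.toEuclideanLin A x))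

lemma quad_eq (A : Matrix (Fin n) (Fin n) ℂ) (hA : A.IsHermitian) (x : EuclideanSpace ℂ (Fin n)) :
    qf A x = ∑ i, hA.eigenvalues i * ‖hA.eigenvectorBasis.repr x i‖^2 := by
  set v := hA.eigenvectorBasis with hv
  set c : Fin n → ℂ := fun i => v.repr x i with hc
  have hx : x = ∑ i, c i • v i := (v.sum_repr x).symm
  have hvi : ∀ i, Matrix.toEuclideanLin A (v i) = (hA.eigenvalues i : ℂ) • v i := by
    intro i
    apply (WithLp.equiv 2 (Fin n → ℂ)).injective
    have := hA.mulVec_eigenvectorBasis i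
    simpa [Matrix.ofLp_toEuclideanLin_apply] using this
  have hAx : Matrix.toEuclideanLin A x = ∑ i, ((hA.eigenvalues i : ℂ) * c i) • v i := by
    conv_lhs => rw [hx]
    rw [map_sum]
    refine Finset.sum_congr rfl fun i _ => ?_
    rw [_root_.map_smul, hvi i, smul_smul, mul_comm]
  rw [qf, hAx]
  conv_lhs => rw [hx]
  rw [v.orthonormal.inner_sum, map_sum]
  refine Finset.sum_congr rfl fun i _ => ?_
  simp only [RCLike.re_to_complex, Complex.mul_re, Complex.mul_im,
    Complex.sq_norm, Complex.normSq_apply, Complex.conj_re, Complex.conj_im, Complex.ofReal_re,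
    Complex.ofReal_im]
  ring

lemma norm_sq_eq (A : Matrix (Fin n) (Fin n) ℂ) (hA : A.IsHermitian)
    (x : EuclideanSpace ℂ (Fin n)) :
    ‖x‖^2 = ∑ i, ‖hA.eigenvectorBasis.repr x i‖^2 := by
  rw [← hA.eigenvectorBasis.repr.norm_map x, EuclideanSpace.norm_eq,
    Real.sq_sqrt (by positivity)]

lemma repr_zero_of_notmem (A : Matrix (Fin n) (Fin n) ℂ) (hA : A.IsHermitian) (S : Set (Fin n))
    (x : EuclideanSpace ℂ (Fin n))
    (hx : x ∈ Submodule.span ℂ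
      ((fun i => (hA.eigenvectorBasis i : EuclideanSpace ℂ (Fin n))) '' S))
    {i : Fin n} (hi : i ∉ S) : hA.eigenvectorBasis.repr x i = 0 := by
  rw [hA.eigenvectorBasis.repr_apply_apply]
  induction hx using Submodule.span_induction with
  | mem y hy =>
    obtain ⟨j, hj, rfl⟩ := hy
    exact hA.eigenvectorBasis.orthonormal.2 (fun h => hi (h ▸ hj))
  | zero => simp
  | add y z _ _ h1 h2 => rw [inner_add_right, h1, h2, add_zero]
  | smul t y _ h1 => rw [inner_smul_right, h1, mul_zero]

lemma qf_le (A : Matrix (Fin n) (Fin n) ℂ) (hA : A.IsHermitian) (S : Set (Fin n)) (c : ℝ)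
    (hc : ∀ i ∈ S, hA.eigenvalues i ≤ c) (x : EuclideanSpace ℂ (Fin n))
    (hx : x ∈ Submodule.span ℂ
      ((fun i => (hA.eigenvectorBasis i : EuclideanSpace ℂ (Fin n))) '' S)) :
    qf A x ≤ c * ‖x‖^2 := by
  rw [quad_eq A hA x, norm_sq_eq A hA x, Finset.mul_sum]
  refine Finset.sum_le_sum fun i _ => ?_
  by_cases hi : i ∈ S
  · exact mul_le_mul_of_nonneg_right (hc i hi) (by positivity)
  · rw [repr_zero_of_notmem A hA S x hx hi]; simp

lemma qf_ge (A : Matrix (Fin n) (Fin n) ℂ) (hA : A.IsHermitian) (S : Set (Fin n)) (c : ℝ)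
    (hc : ∀ i ∈ S, c ≤ hA.eigenvalues i) (x : EuclideanSpace ℂ (Fin n))
    (hx : x ∈ Submodule.span ℂ
      ((fun i => (hA.eigenvectorBasis i : EuclideanSpace ℂ (Fin n))) '' S)) :
    c * ‖x‖^2 ≤ qf A x := by
  rw [quad_eq A hA x, norm_sq_eq A hA x, Finset.mul_sum]
  refine Finset.sum_le_sum fun i _ => ?_
  by_cases hi : i ∈ S
  · exact mul_le_mul_of_nonneg_right (hc i hi) (by positivity)
  · rw [repr_zero_of_notmem A hA S x hx hi]; simp

lemma finrank_span_eig (A : Matrix (Fin n) (Fin n) ℂ) (hA : A.IsHermitian) (S : Finset (Fin n)) :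
    finrank ℂ (Submodule.span ℂ
      ((fun i => (hA.eigenvectorBasis i : EuclideanSpace ℂ (Fin n))) '' ↑S)) = S.card := by
  have hli : LinearIndependent ℂ (fun t : {x // x ∈ S} =>
      (hA.eigenvectorBasis t : EuclideanSpace ℂ (Fin n))) :=
    hA.eigenvectorBasis.orthonormal.linearIndependent.comp _ Subtype.val_injective
  have : (fun i => (hA.eigenvectorBasis i : EuclideanSpace ℂ (Fin n))) '' ↑S
      = Set.range (fun t : {x // x ∈ S} =>
        (hA.eigenvectorBasis t : EuclideanSpace ℂ (Fin n))) := by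
    ext y; simp [Set.mem_image, Set.mem_range]
  rw [this, finrank_span_eq_card hli, Fintype.card_coe]

lemma exists_unit_common (U V W : Submodule ℂ (EuclideanSpace ℂ (Fin n)))
    (h : 2 * n < finrank ℂ U + finrank ℂ V + finrank ℂ W) :
    ∃ x : EuclideanSpace ℂ (Fin n), x ≠ 0 ∧ x ∈ U ∧ x ∈ V ∧ x ∈ W := by
  have hdim : finrank ℂ (EuclideanSpace ℂ (Fin n)) = n := by
    simp [finrank_euclideanSpace]
  have h1 : finrank ℂ U + finrank ℂ V ≤ finrank ℂ ↥(U ⊔ V) + finrank ℂ ↥(U ⊓ V) :=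
    le_of_eq (Submodule.finrank_sup_add_finrank_inf_eq U V).symm
  have h1' : finrank ℂ ↥(U ⊔ V) ≤ n := le_trans (U ⊔ V).finrank_le (le_of_eq hdim)
  have h2 : finrank ℂ ↥(U ⊓ V) + finrank ℂ W
      ≤ finrank ℂ ↥((U ⊓ V) ⊔ W) + finrank ℂ ↥(U ⊓ V ⊓ W) :=
    le_of_eq (Submodule.finrank_sup_add_finrank_inf_eq (U ⊓ V) W).symm
  have h2' : finrank ℂ ↥((U ⊓ V) ⊔ W) ≤ n := le_trans ((U ⊓ V) ⊔ W).finrank_le (le_of_eq hdim)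
  have hpos : 0 < finrank ℂ ↥(U ⊓ V ⊓ W) := by omega
  have : Nontrivial ↥(U ⊓ V ⊓ W) := (finrank_pos_iff (R := ℂ)).mp hpos
  obtain ⟨⟨x, hx⟩, hx0⟩ := exists_ne (0 : ↥(U ⊓ V ⊓ W))
  refine ⟨x, ?_, hx.1.1, hx.1.2, hx.2⟩
  intro h0; apply hx0; exact Subtype.ext h0

lemma qf_add (A B : Matrix (Fin n) (Fin n) ℂ) (x : EuclideanSpace ℂ (Fin n)) :
    qf (A + B) x = qf A x + qf B x := by
  unfold qf
  rw [map_add, LinearMap.add_apply, inner_add_right, map_add]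

lemma weyl_upper (A B : Matrix (Fin n) (Fin n) ℂ) (a b g : Fin n → ℝ)
    (hA : IsEigSeq A a) (hB : IsEigSeq B b) (hC : IsEigSeq (A + B) g) (i j k : Fin n)
    (hk : (k : ℕ) = (i : ℕ) + (j : ℕ)) : g k ≤ a i + b j := by
  obtain ⟨ham, hA', σA, hσA⟩ := hA
  obtain ⟨hbm, hB', σB, hσB⟩ := hB
  obtain ⟨hgm, hC', σC, hσC⟩ := hC
  set SA : Finset (Fin n) := (Finset.Ici i).image σA with hSA
  set SB : Finset (Fin n) := (Finset.Ici j).image σB with hSB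
  set SC : Finset (Fin n) := (Finset.Iic k).image σC with hSC
  set U := Submodule.span ℂ
    ((fun t => (hA'.eigenvectorBasis t : EuclideanSpace ℂ (Fin n))) '' ↑SA)
  set V := Submodule.span ℂ
    ((fun t => (hB'.eigenvectorBasis t : EuclideanSpace ℂ (Fin n))) '' ↑SB)
  set W := Submodule.span ℂ
    ((fun t => (hC'.eigenvectorBasis t : EuclideanSpace ℂ (Fin n))) '' ↑SC)
  have hcard : 2 * n < finrank ℂ U + finrank ℂ V + finrank ℂ W := by
    rw [finrank_span_eig, finrank_span_eig, finrank_span_eig, hSA, hSB, hSC,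
      Finset.card_image_of_injective _ σA.injective,
      Finset.card_image_of_injective _ σB.injective,
      Finset.card_image_of_injective _ σC.injective, Fin.card_Ici, Fin.card_Ici, Fin.card_Iic]
    have := i.isLt; have := j.isLt; have := k.isLt
    omega
  obtain ⟨x, hx0, hxU, hxV, hxW⟩ := exists_unit_common U V W hcard
  have hnx : (0:ℝ) < ‖x‖^2 := pow_pos (norm_pos_iff.mpr hx0) 2
  have h1 : qf A x ≤ a i * ‖x‖^2 := by
    refine qf_le A hA' _ _ (fun t ht => ?_) x hxU
    obtain ⟨s, hs, rfl⟩ := Finset.mem_image.mp ht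
    have h := congrFun hσA s; simp only [Function.comp_apply] at h; rw [h]
    exact ham (Finset.mem_Ici.mp hs)
  have h2 : qf B x ≤ b j * ‖x‖^2 := by
    refine qf_le B hB' _ _ (fun t ht => ?_) x hxV
    obtain ⟨s, hs, rfl⟩ := Finset.mem_image.mp ht
    have h := congrFun hσB s; simp only [Function.comp_apply] at h; rw [h]
    exact hbm (Finset.mem_Ici.mp hs)
  have h3 : g k * ‖x‖^2 ≤ qf (A + B) x := by
    refine qf_ge (A + B) hC' _ _ (fun t ht => ?_) x hxW
    obtain ⟨s, hs, rfl⟩ := Finset.mem_image.mp ht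
    have h := congrFun hσC s; simp only [Function.comp_apply] at h; rw [h]
    exact hgm (Finset.mem_Iic.mp hs)
  rw [qf_add] at h3
  have : g k * ‖x‖^2 ≤ (a i + b j) * ‖x‖^2 := by nlinarith
  exact le_of_mul_le_mul_right (by linarith [this]) hnx

lemma weyl_lower (A B : Matrix (Fin n) (Fin n) ℂ) (a b g : Fin n → ℝ)
    (hA : IsEigSeq A a) (hB : IsEigSeq B b) (hC : IsEigSeq (A + B) g) (i j k : Fin n)
    (hk : (i : ℕ) + (j : ℕ) = (k : ℕ) + (n - 1)) : a i + b j ≤ g k := by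
  obtain ⟨ham, hA', σA, hσA⟩ := hA
  obtain ⟨hbm, hB', σB, hσB⟩ := hB
  obtain ⟨hgm, hC', σC, hσC⟩ := hC
  set SA : Finset (Fin n) := (Finset.Iic i).image σA with hSA
  set SB : Finset (Fin n) := (Finset.Iic j).image σB with hSB
  set SC : Finset (Fin n) := (Finset.Ici k).image σC with hSC
  set U := Submodule.span ℂ
    ((fun t => (hA'.eigenvectorBasis t : EuclideanSpace ℂ (Fin n))) '' ↑SA)
  set V := Submodule.span ℂ
    ((fun t => (hB'.eigenvectorBasis t : EuclideanSpace ℂ (Fin n))) '' ↑SB)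
  set W := Submodule.span ℂ
    ((fun t => (hC'.eigenvectorBasis t : EuclideanSpace ℂ (Fin n))) '' ↑SC)
  have hcard : 2 * n < finrank ℂ U + finrank ℂ V + finrank ℂ W := by
    rw [finrank_span_eig, finrank_span_eig, finrank_span_eig, hSA, hSB, hSC,
      Finset.card_image_of_injective _ σA.injective,
      Finset.card_image_of_injective _ σB.injective,
      Finset.card_image_of_injective _ σC.injective, Fin.card_Iic, Fin.card_Iic, Fin.card_Ici]
    have := i.isLt; have := j.isLt; have := k.isLt
    omega
  obtain ⟨x, hx0, hxU, hxV, hxW⟩ := exists_unit_common U V W hcard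
  have hnx : (0:ℝ) < ‖x‖^2 := pow_pos (norm_pos_iff.mpr hx0) 2
  have h1 : a i * ‖x‖^2 ≤ qf A x := by
    refine qf_ge A hA' _ _ (fun t ht => ?_) x hxU
    obtain ⟨s, hs, rfl⟩ := Finset.mem_image.mp ht
    have h := congrFun hσA s; simp only [Function.comp_apply] at h; rw [h]
    exact ham (Finset.mem_Iic.mp hs)
  have h2 : b j * ‖x‖^2 ≤ qf B x := by
    refine qf_ge B hB' _ _ (fun t ht => ?_) x hxV
    obtain ⟨s, hs, rfl⟩ := Finset.mem_image.mp ht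
    have h := congrFun hσB s; simp only [Function.comp_apply] at h; rw [h]
    exact hbm (Finset.mem_Iic.mp hs)
  have h3 : qf (A + B) x ≤ g k * ‖x‖^2 := by
    refine qf_le (A + B) hC' _ _ (fun t ht => ?_) x hxW
    obtain ⟨s, hs, rfl⟩ := Finset.mem_image.mp ht
    have h := congrFun hσC s; simp only [Function.comp_apply] at h; rw [h]
    exact hgm (Finset.mem_Ici.mp hs)
  rw [qf_add] at h3
  have : (a i + b j) * ‖x‖^2 ≤ g k * ‖x‖^2 := by nlinarith
  exact le_of_mul_le_mul_right this hnx

/-- Integer version of `psi3`. -/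
def psiZ (a b g : Fin 3 → ℤ) : ℤ :=
  if 0 ≤ g 1 - a 2 - b 0 ∧ g 0 - a 0 - b 1 < 0 then
    (g 1 - a 2 - b 0) - (g 0 - a 0 - b 1)
  else if 0 ≤ g 2 - a 1 - b 2 ∧ g 1 - a 2 - b 0 < 0 then
    (g 2 - a 1 - b 2) - (g 1 - a 2 - b 0)
  else if 0 ≤ g 0 - a 0 - b 1 ∧ g 2 - a 1 - b 2 < 0 then
    (g 0 - a 0 - b 1) - (g 2 - a 1 - b 2)
  else 0

lemma psi3_cast (a b g : Fin 3 → ℤ) :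
    psi3 (fun i => (a i : ℝ)) (fun i => (b i : ℝ)) (fun i => (g i : ℝ))
      = ((psiZ a b g : ℤ) : ℝ) := by
  rw [psi3, psiZ]
  have e1 : ((0:ℝ) ≤ (g 1 : ℝ) - (a 2 : ℝ) - (b 0 : ℝ)) ↔ (0 ≤ g 1 - a 2 - b 0) := by
    constructor <;> intro h <;> exact_mod_cast h
  have e2 : ((g 0 : ℝ) - (a 0 : ℝ) - (b 1 : ℝ) < 0) ↔ (g 0 - a 0 - b 1 < 0) := by
    constructor <;> intro h <;> exact_mod_cast h
  have e3 : ((0:ℝ) ≤ (g 2 : ℝ) - (a 1 : ℝ) - (b 2 : ℝ)) ↔ (0 ≤ g 2 - a 1 - b 2) := by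
    constructor <;> intro h <;> exact_mod_cast h
  have e4 : ((g 1 : ℝ) - (a 2 : ℝ) - (b 0 : ℝ) < 0) ↔ (g 1 - a 2 - b 0 < 0) := by
    constructor <;> intro h <;> exact_mod_cast h
  have e5 : ((0:ℝ) ≤ (g 0 : ℝ) - (a 0 : ℝ) - (b 1 : ℝ)) ↔ (0 ≤ g 0 - a 0 - b 1) := by
    constructor <;> intro h <;> exact_mod_cast h
  have e6 : ((g 2 : ℝ) - (a 1 : ℝ) - (b 2 : ℝ) < 0) ↔ (g 2 - a 1 - b 2 < 0) := by
    constructor <;> intro h <;> exact_mod_cast h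
  simp only [e1, e2, e3, e4, e5, e6]
  split_ifs <;> push_cast <;> ring

end HornAux

theorem stmt7 (a b g : Fin 3 → ℤ)
    (ha : a 1 ≤ a 0 ∧ a 2 ≤ a 1) (hb : b 1 ≤ b 0 ∧ b 2 ≤ b 1) (hg : g 1 ≤ g 0 ∧ g 2 ≤ g 1)
    (htr : g 0 + g 1 + g 2 = a 0 + a 1 + a 2 + (b 0 + b 1 + b 2))
    (hH : HornMem (fun i => (a i : ℝ)) (fun i => (b i : ℝ)) (fun i => (g i : ℝ))) :
    ∃ k : ℕ, J3 (fun i => (a i : ℝ)) (fun i => (b i : ℝ)) (fun i => (g i : ℝ)) = (k : ℝ) := by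
  classical
  obtain ⟨A, B, hA, hB, hC⟩ := hH
  -- the twelve Horn inequalities, in ℤ
  have W1 : g 0 ≤ a 0 + b 0 := by
    exact_mod_cast HornAux.weyl_upper A B _ _ _ hA hB hC 0 0 0 (by decide)
  have W2 : g 1 ≤ a 0 + b 1 := by
    exact_mod_cast HornAux.weyl_upper A B _ _ _ hA hB hC 0 1 1 (by decide)
  have W3 : g 1 ≤ a 1 + b 0 := by
    exact_mod_cast HornAux.weyl_upper A B _ _ _ hA hB hC 1 0 1 (by decide)
  have W4 : g 2 ≤ a 0 + b 2 := by
    exact_mod_cast HornAux.weyl_upper A B _ _ _ hA hB hC 0 2 2 (by decide)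
  have W5 : g 2 ≤ a 2 + b 0 := by
    exact_mod_cast HornAux.weyl_upper A B _ _ _ hA hB hC 2 0 2 (by decide)
  have W6 : g 2 ≤ a 1 + b 1 := by
    exact_mod_cast HornAux.weyl_upper A B _ _ _ hA hB hC 1 1 2 (by decide)
  have W7 : a 0 + b 2 ≤ g 0 := by
    exact_mod_cast HornAux.weyl_lower A B _ _ _ hA hB hC 0 2 0 (by decide)
  have W8 : a 2 + b 0 ≤ g 0 := by
    exact_mod_cast HornAux.weyl_lower A B _ _ _ hA hB hC 2 0 0 (by decide)
  have W9 : a 1 + b 2 ≤ g 1 := by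
    exact_mod_cast HornAux.weyl_lower A B _ _ _ hA hB hC 1 2 1 (by decide)
  have W10 : a 2 + b 1 ≤ g 1 := by
    exact_mod_cast HornAux.weyl_lower A B _ _ _ hA hB hC 2 1 1 (by decide)
  have W11 : a 2 + b 2 ≤ g 2 := by
    exact_mod_cast HornAux.weyl_lower A B _ _ _ hA hB hC 2 2 2 (by decide)
  have W12 : a 1 + b 1 ≤ g 0 := by
    exact_mod_cast HornAux.weyl_lower A B _ _ _ hA hB hC 1 1 0 (by decide)
  set P : ℤ := HornAux.psiZ a b g with hPdef
  set Q : ℤ := HornAux.psiZ b a g with hQdef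
  set N : ℤ := (a 0 - a 2 + (b 0 - b 2) + (g 0 - g 2)) - 3 * |a 1 + b 1 - g 1| - 2 * P - 2 * Q
    with hNdef
  obtain ⟨k, hk⟩ : ∃ k : ℕ, N = 6 * (k : ℤ) := by
    refine ⟨(N / 6).toNat, ?_⟩
    have hNval : 0 ≤ N ∧ 6 ∣ N := by
      rcases abs_cases (a 1 + b 1 - g 1) with ⟨habs, hsgn⟩ | ⟨habs, hsgn⟩ <;>
        rw [hNdef, habs] <;>
        rw [hPdef, HornAux.psiZ, hQdef, HornAux.psiZ] <;>
        split_ifs <;>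
        constructor <;> omega
    omega
  refine ⟨k, ?_⟩
  rw [J3, HornAux.psi3_cast a b g, HornAux.psi3_cast b a g]
  have habs : |(a 1 : ℝ) + (b 1 : ℝ) - (g 1 : ℝ)| = ((|a 1 + b 1 - g 1| : ℤ) : ℝ) := by
    push_cast; ring_nf
  rw [habs]
  have hNR : ((N : ℤ) : ℝ) = 6 * (k : ℝ) := by exact_mod_cast hk
  rw [hNdef] at hNR
  push_cast at hNR ⊢
  linarith [hNR]
end
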